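/- arXiv:1706.01055 — 2 statements merged into one kernel-verified Lean document; each statement's English description precedes it below -/
import Mathlib

section
/- Let N ≥ n ≥ 0 be integers, y an integer, and define S_x^{(k)}(w) = w^{x+1}(1−w)^k. Then, as an identity of rational functions in w, ∑_{r=0}^{N−n} (N−n)! / ( (∏_{s=0, s≠r}^{N−n} (s−r)) · S_{y−r}^{(N)}(w) ) = 1 / S_y^{(n)}(w). -/
open Finset

lemma aux_prod (M r : ℕ) (hr : r ≤ M) :
    ∏ s ∈ (Finset.range (M+1)).erase r, ((s : ℤ) - r) =
      (-1)^r * r.factorial * (M - r).factorial := by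
  have hsplit : (Finset.range (M+1)).erase r = Finset.range r ∪ Finset.Ico (r+1) (M+1) := by
    ext s; simp only [Finset.mem_erase, Finset.mem_range, Finset.mem_union, Finset.mem_Ico]
    omega
  have hdisj : Disjoint (Finset.range r) (Finset.Ico (r+1) (M+1)) := by
    simp only [Finset.disjoint_left, Finset.mem_range, Finset.mem_Ico]
    omega
  have h1 : ∏ s ∈ Finset.range r, ((s:ℤ) - r) = (-1)^r * r.factorial := by
    rw [← Finset.prod_range_reflect]
    have : ∀ j ∈ Finset.range r, ((r - 1 - j : ℕ) : ℤ) - r = (-1) * ((j:ℤ) + 1) := by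
      intro j hj
      simp only [Finset.mem_range] at hj
      push_cast [Nat.sub_sub]
      omega
    rw [Finset.prod_congr rfl this, Finset.prod_mul_distrib, Finset.prod_const, card_range]
    congr 1
    exact_mod_cast Finset.prod_range_add_one_eq_factorial r
  have h2 : ∏ s ∈ Finset.Ico (r+1) (M+1), ((s:ℤ) - r) = (M - r).factorial := by
    rw [Finset.prod_Ico_eq_prod_range]
    have hc : M + 1 - (r+1) = M - r := by omega
    rw [hc]
    have : ∀ j ∈ Finset.range (M - r), ((r + 1 + j : ℕ) : ℤ) - r = ((j:ℤ) + 1) := by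
      intro j hj; push_cast; ring
    rw [Finset.prod_congr rfl this]
    exact_mod_cast Finset.prod_range_add_one_eq_factorial (M - r)
  rw [hsplit, Finset.prod_union hdisj, h1, h2, mul_assoc]

/-- With `S_x^{(k)}(w) = w^{x+1}(1−w)^k` in the field of rational functions `ℚ(w)`,
for integers `N ≥ n ≥ 0` and `y`:
`∑_{r=0}^{N−n} (N−n)! / ((∏_{s≠r}(s−r)) S_{y−r}^{(N)}(w)) = 1/S_y^{(n)}(w)`. -/
theorem stmt1 (N n y : ℤ) (hn : 0 ≤ n) (hnN : n ≤ N) :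
    let w : RatFunc ℚ := RatFunc.X
    let S : ℤ → ℤ → RatFunc ℚ := fun x k => w ^ (x + 1) * (1 - w) ^ k
    let M : ℕ := (N - n).toNat
    ∑ r ∈ Finset.range (M + 1),
        ((Nat.factorial M : RatFunc ℚ) /
          ((∏ s ∈ (Finset.range (M + 1)).erase r, ((s : RatFunc ℚ) - (r : ℕ))) *
            S (y - r) N))
      = 1 / S y n := by
  intro w S M
  have hw : w ≠ 0 := RatFunc.X_ne_zero
  have hpoly : ((1 : Polynomial ℚ) - Polynomial.X) ≠ 0 := by
    intro h
    have := congrArg (fun p => Polynomial.coeff p 1) h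
    simp [Polynomial.coeff_one] at this
  have h1w : (1 : RatFunc ℚ) - w ≠ 0 := by
    have := RatFunc.algebraMap_ne_zero (K := ℚ) hpoly
    simpa [map_sub, map_one, RatFunc.algebraMap_X] using this
  haveI : CharZero (RatFunc ℚ) :=
    charZero_of_injective_algebraMap (algebraMap ℚ (RatFunc ℚ)).injective
  have hM : (M : ℤ) = N - n := Int.toNat_of_nonneg (by omega)
  have key : ∀ r ∈ Finset.range (M + 1),
      ((Nat.factorial M : RatFunc ℚ) /
          ((∏ s ∈ (Finset.range (M + 1)).erase r, ((s : RatFunc ℚ) - (r : ℕ))) *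
            S (y - r) N))
      = (M.choose r : RatFunc ℚ) * (-1)^r * w^r *
          (w ^ (-(y+1)) * (1 - w) ^ (-N)) := by
    intro r hr
    have hrM : r ≤ M := Nat.lt_succ_iff.mp (Finset.mem_range.mp hr)
    have hP : (∏ s ∈ (Finset.range (M + 1)).erase r, ((s : RatFunc ℚ) - (r : ℕ)))
        = (((-1)^r * r.factorial * (M - r).factorial : ℤ) : RatFunc ℚ) := by
      rw [← aux_prod M r hrM]
      push_cast
      rfl
    have hC : (((-1)^r * r.factorial * (M - r).factorial : ℤ) : RatFunc ℚ) ≠ 0 := by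
      rw [Int.cast_ne_zero]
      positivity
    have hS : S (y - r) N ≠ 0 := by
      exact mul_ne_zero (zpow_ne_zero _ hw) (zpow_ne_zero _ h1w)
    rw [hP, div_eq_iff (mul_ne_zero hC hS)]
    show (M.factorial : RatFunc ℚ) = _ * (_ * (w ^ (y - (r:ℤ) + 1) * (1 - w) ^ N))
    have e1 : w ^ ((r:ℤ)) * w ^ (-(y+1)) * w ^ (y - (r:ℤ) + 1) = 1 := by
      rw [← zpow_add₀ hw, ← zpow_add₀ hw]
      rw [show (r:ℤ) + -(y+1) + (y - (r:ℤ) + 1) = 0 by ring, zpow_zero]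
    have e2 : (1 - w) ^ (-N) * (1 - w) ^ N = 1 := by
      rw [← zpow_add₀ h1w, neg_add_cancel, zpow_zero]
    have e3 : ((-1 : RatFunc ℚ))^r * (-1)^r = 1 := by
      rw [← pow_add, ← two_mul, pow_mul]
      norm_num
    have hfac : ((M.choose r : RatFunc ℚ)) * (r.factorial : RatFunc ℚ) * ((M - r).factorial : RatFunc ℚ)
        = (M.factorial : RatFunc ℚ) := by
      exact_mod_cast congrArg (Nat.cast : ℕ → RatFunc ℚ) (Nat.choose_mul_factorial_mul_factorial hrM)
    calc (M.factorial : RatFunc ℚ)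
        = ((M.choose r : RatFunc ℚ) * (r.factorial : RatFunc ℚ) * ((M - r).factorial : RatFunc ℚ)) *
            (((-1 : RatFunc ℚ))^r * (-1)^r) *
            ((w ^ ((r:ℤ)) * w ^ (-(y+1)) * w ^ (y - (r:ℤ) + 1)) *
              ((1 - w) ^ (-N) * (1 - w) ^ N)) := by
          rw [e1, e2, e3, hfac]; ring
      _ = _ := by push_cast; rw [← zpow_natCast w r]; ring
  rw [Finset.sum_congr rfl key, ← Finset.sum_mul]
  have hbin : ∑ r ∈ Finset.range (M + 1), (M.choose r : RatFunc ℚ) * (-1)^r * w^r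
      = (1 - w) ^ M := by
    have := add_pow (-w) (1 : RatFunc ℚ) M
    simp only [one_pow, mul_one] at this
    rw [show (1 : RatFunc ℚ) - w = -w + 1 by ring, this]
    refine Finset.sum_congr rfl fun r hr => ?_
    rw [neg_pow]
    ring
  rw [hbin]
  show (1 - w) ^ M * (w ^ (-(y+1)) * (1 - w) ^ (-N)) = 1 / (w ^ (y+1) * (1 - w) ^ n)
  rw [one_div, mul_inv, ← zpow_neg w, ← zpow_neg (1 - w), ← zpow_natCast (1 - w) M]
  calc (1 - w) ^ ((M:ℤ)) * (w ^ (-(y+1)) * (1 - w) ^ (-N))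
      = w ^ (-(y+1)) * ((1 - w) ^ ((M:ℤ)) * (1 - w) ^ (-N)) := by ring
    _ = w ^ (-(y+1)) * (1 - w) ^ ((M:ℤ) + -N) := by rw [zpow_add₀ h1w]
    _ = w ^ (-(y+1)) * (1 - w) ^ (-n) := by rw [hM]; congr 1; ring
end

section
/- Let m, n, x, y be integers and define K₀(m,x;n,y) = −((y−x+1)_{n−m−1}/(n−m−1)!) · 1_{n>m} · 1_{y≥x} (where the expression is 0 unless n > m and y ≥ x). Then K₀(m,x;n,y) − K₀(m,x;n+1,y) + K₀(m,x;n+1,y−1) = 1 if (m,x) = (n,y) and 0 otherwise. -/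
private lemma key3 (a : ℤ) (ha : 0 ≤ a) (d : ℕ) :
    (((ascPochhammer ℤ d).eval (a + 1) : ℤ) : ℚ) / (Nat.factorial d : ℚ)
      = ((a.toNat + d).choose d : ℚ) := by
  have h1 : (a + 1 : ℤ) = ((a.toNat + 1 : ℕ) : ℤ) := by
    push_cast [Int.toNat_of_nonneg ha]; ring
  rw [h1, ← ascPochhammer_eval_cast, ascPochhammer_nat_eq_ascFactorial,
    Nat.ascFactorial_eq_factorial_mul_choose]
  rw [div_eq_iff (by exact_mod_cast d.factorial_ne_zero)]
  push_cast
  ring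

/-- With `K₀(m,x;n,y) = −((y−x+1)_{n−m−1}/(n−m−1)!)·1_{n>m}·1_{y≥x}`,
one has `K₀(m,x;n,y) − K₀(m,x;n+1,y) + K₀(m,x;n+1,y−1) = 1_{(m,x)=(n,y)}`. -/
theorem stmt3 (m x n y : ℤ) :
    let K₀ : ℤ → ℤ → ℤ → ℤ → ℚ := fun m x n y =>
      -(if m < n ∧ x ≤ y then
          (((ascPochhammer ℤ (n - m - 1).toNat).eval (y - x + 1) : ℤ) : ℚ) /
            (Nat.factorial (n - m - 1).toNat : ℚ)
        else 0)
    K₀ m x n y - K₀ m x (n + 1) y + K₀ m x (n + 1) (y - 1)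
      = if (m, x) = (n, y) then 1 else 0 := by
  intro K₀
  simp only [K₀, Prod.mk.injEq]
  by_cases hm : m < n + 1
  swap
  · have h1 : ¬ (m < n ∧ x ≤ y) := by omega
    have h2 : ¬ (m < n + 1 ∧ x ≤ y) := by omega
    have h3 : ¬ (m < n + 1 ∧ x ≤ y - 1) := by omega
    have h4 : ¬ (m = n ∧ x = y) := by omega
    rw [if_neg h1, if_neg h2, if_neg h3, if_neg h4]
    simp
  by_cases hx : x ≤ y
  swap
  · have h1 : ¬ (m < n ∧ x ≤ y) := by omega
    have h2 : ¬ (m < n + 1 ∧ x ≤ y) := by omega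
    have h3 : ¬ (m < n + 1 ∧ x ≤ y - 1) := by omega
    have h4 : ¬ (m = n ∧ x = y) := by omega
    rw [if_neg h1, if_neg h2, if_neg h3, if_neg h4]
    simp
  have e2 : (n + 1 - m - 1 : ℤ) = n - m := by ring
  by_cases hmn : m < n
  · -- k ≥ 1
    have hd : (n - m).toNat = (n - m - 1).toNat + 1 := by omega
    by_cases hxy : x ≤ y - 1
    · -- Pascal case
      have h1 : (m < n ∧ x ≤ y) := ⟨hmn, hx⟩
      have h2 : (m < n + 1 ∧ x ≤ y) := ⟨hm, hx⟩
      have h3 : (m < n + 1 ∧ x ≤ y - 1) := ⟨hm, hxy⟩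
      have h4 : ¬ (m = n ∧ x = y) := by omega
      rw [if_pos h1, if_pos h2, if_pos h3, if_neg h4, e2]
      have e3 : (y - 1 - x + 1 : ℤ) = (y - x - 1) + 1 := by ring
      rw [e3, key3 _ (by omega), key3 _ (by omega), key3 _ (by omega), hd]
      set d := (n - m - 1).toNat
      have hA : (y - x - 1).toNat + (d + 1) = (y - x).toNat + d := by omega
      have hB : (y - x).toNat + (d + 1) = ((y - x).toNat + d) + 1 := by omega
      rw [hA, hB, Nat.choose_succ_succ]
      push_cast
      ring
    · -- x = y, m < n
      have hxy' : x = y := by omega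
      have h1 : (m < n ∧ x ≤ y) := ⟨hmn, hx⟩
      have h2 : (m < n + 1 ∧ x ≤ y) := ⟨hm, hx⟩
      have h3 : ¬ (m < n + 1 ∧ x ≤ y - 1) := by omega
      have h4 : ¬ (m = n ∧ x = y) := by omega
      rw [if_pos h1, if_pos h2, if_neg h3, if_neg h4, e2]
      rw [key3 _ (by omega), key3 _ (by omega), hd]
      have : (y - x).toNat = 0 := by omega
      simp [this]
  · -- m = n
    have hmn' : m = n := by omega
    have h1 : ¬ (m < n ∧ x ≤ y) := by omega
    have h2 : (m < n + 1 ∧ x ≤ y) := ⟨hm, hx⟩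
    have hd0 : (n + 1 - m - 1).toNat = 0 := by omega
    by_cases hxy : x ≤ y - 1
    · have h3 : (m < n + 1 ∧ x ≤ y - 1) := ⟨hm, hxy⟩
      have h4 : ¬ (m = n ∧ x = y) := by omega
      rw [if_neg h1, if_pos h2, if_pos h3, if_neg h4, hd0]
      simp
    · have hxy' : x = y := by omega
      have h3 : ¬ (m < n + 1 ∧ x ≤ y - 1) := by omega
      have h4 : (m = n ∧ x = y) := ⟨hmn', hxy'⟩
      rw [if_neg h1, if_pos h2, if_neg h3, if_pos h4, hd0]
      simp
end
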